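/- arXiv:1606.03305 — 3 statements merged into one kernel-verified Lean document; each statement's English description precedes it below -/
import Mathlib

section
/- A symmetric 2×2 real matrix B can be written as B = (b aᵀ + a bᵀ)/2 for some vectors a, b ∈ ℝ² if and only if det(B) ≤ 0. -/
open Matrix

/-- A symmetric 2×2 real matrix `B` is a symmetrized rank-one matrix,
i.e. `B = (b aᵀ + a bᵀ)/2` for some `a b : ℝ²`, iff `det B ≤ 0`. -/
theorem symmetrized_rank_one_iff_det_nonpos
    (B : Matrix (Fin 2) (Fin 2) ℝ) (hB : B.IsSymm) :
    (∃ a b : Fin 2 → ℝ,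
        B = (1/2 : ℝ) • (vecMulVec b a + vecMulVec a b)) ↔ B.det ≤ 0 := by
  have hsym : B 1 0 = B 0 1 := by
    simpa using hB.apply 0 1
  constructor
  · rintro ⟨a, b, rfl⟩
    rw [Matrix.det_fin_two]
    simp only [Matrix.smul_apply, Matrix.add_apply, vecMulVec_apply, smul_eq_mul]
    nlinarith [sq_nonneg (a 0 * b 1 - a 1 * b 0)]
  · intro hdet
    set p := B 0 0 with hp
    set q := B 0 1 with hq
    set r := B 1 1 with hr
    have hdet' : p * r - q * q ≤ 0 := by
      rw [Matrix.det_fin_two] at hdet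
      rw [hsym] at hdet
      linarith
    have hnn : 0 ≤ q ^ 2 - p * r := by nlinarith
    set s := Real.sqrt (q ^ 2 - p * r) with hs
    have hs2 : s ^ 2 = q ^ 2 - p * r := Real.sq_sqrt hnn
    by_cases hp0 : p = 0
    · have h00 : B 0 0 = 0 := by rw [← hp]; exact hp0
      refine ⟨![0, 1], ![2 * q, r], ?_⟩
      ext i j
      fin_cases i <;> fin_cases j <;>
        simp [vecMulVec_apply, hsym, h00, ← hq, ← hr] <;> ring
    · refine ⟨![1, (q - s) / p], ![p, q + s], ?_⟩
      ext i j
      fin_cases i <;> fin_cases j <;>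
        simp [vecMulVec_apply, hsym, ← hp, ← hq, ← hr] <;>
        field_simp <;> nlinarith [hs2]
end

section
/- A symmetric 3×3 real matrix B is a symmetrized rank-one matrix, i.e. B = (b aᵀ + a bᵀ)/2 for some vectors a, b ∈ ℝ³, if and only if either B has two eigenvalues of opposite signs and one zero eigenvalue, or B has at least two zero eigenvalues (counting multiplicity). -/
open Matrix

lemma sum_fin3_eq {M : Type*} [AddCommMonoid M] (f : Fin 3 → M) (i j k : Fin 3)
    (hij : i ≠ j) (hik : i ≠ k) (hjk : j ≠ k) : ∑ m, f m = f i + (f j + f k) := by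
  have h : ({i, j, k} : Finset (Fin 3)) = Finset.univ := by
    apply Finset.eq_univ_of_card
    rw [Finset.card_insert_of_notMem (by simp [hij, hik]),
      Finset.card_insert_of_notMem (by simp [hjk]), Finset.card_singleton]
    rfl
  rw [← h, Finset.sum_insert (by simp [hij, hik]), Finset.sum_insert (by simp [hjk]),
    Finset.sum_singleton]

lemma eig_cases (lam : Fin 3 → ℝ) (i j k : Fin 3) (hij : i ≠ j) (hik : i ≠ k) (hjk : j ≠ k)
    (hj : lam j = 0) (hle : lam i * lam k ≤ 0) :
    (∃ i j k : Fin 3, i ≠ j ∧ i ≠ k ∧ j ≠ k ∧ lam i < 0 ∧ lam j = 0 ∧ 0 < lam k) ∨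
    (∃ i j : Fin 3, i ≠ j ∧ lam i = 0 ∧ lam j = 0) := by
  rcases lt_or_eq_of_le hle with hlt | heq
  · rcases mul_neg_iff.mp hlt with ⟨h1, h2⟩ | ⟨h1, h2⟩
    · exact Or.inl ⟨k, j, i, hjk.symm, hik.symm, hij.symm, h2, hj, h1⟩
    · exact Or.inl ⟨i, j, k, hij, hik, hjk, h1, hj, h2⟩
  · rcases mul_eq_zero.mp heq with h | h
    · exact Or.inr ⟨i, j, hij, h, hj⟩
    · exact Or.inr ⟨k, j, hjk.symm, h, hj⟩

/-- A symmetric 3×3 real matrix `B` is a symmetrized rank-one matrix iff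
either it has two eigenvalues of opposite signs and one zero eigenvalue,
or it has at least two zero eigenvalues. -/
theorem symmetrized_rank_one_iff_eigenvalues
    (B : Matrix (Fin 3) (Fin 3) ℝ) (hB : B.IsHermitian) :
    (∃ a b : Fin 3 → ℝ,
        B = (1/2 : ℝ) • (vecMulVec b a + vecMulVec a b)) ↔
      ((∃ i j k : Fin 3, i ≠ j ∧ i ≠ k ∧ j ≠ k ∧
          hB.eigenvalues i < 0 ∧ hB.eigenvalues j = 0 ∧ 0 < hB.eigenvalues k) ∨
       (∃ i j : Fin 3, i ≠ j ∧ hB.eigenvalues i = 0 ∧ hB.eigenvalues j = 0)) := by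
  set lam := hB.eigenvalues with hlam
  set U : Matrix (Fin 3) (Fin 3) ℝ := (hB.eigenvectorUnitary : Matrix (Fin 3) (Fin 3) ℝ) with hUdef
  have hspec : B = U * diagonal lam * star U := by
    simpa [RCLike.ofReal_real_eq_id] using hB.spectral_theorem
  have hUnit : star U * U = 1 :=
    Matrix.UnitaryGroup.star_mul_self hB.eigenvectorUnitary
  have hBentry : ∀ p q, B p q = ∑ m, lam m * (U p m * U q m) := by
    intro p q
    conv_lhs => rw [hspec]
    rw [Matrix.mul_apply]
    simp only [Matrix.mul_diagonal, Matrix.star_apply, star_trivial]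
    exact Finset.sum_congr rfl fun m _ => by ring
  constructor
  · rintro ⟨a, b, hab⟩
    have hBab : ∀ p q, B p q = (b p * a q + a p * b q) / 2 := by
      intro p q
      rw [hab]
      simp [vecMulVec_apply]
      ring
    have htr : trace B = ∑ m, lam m := by
      conv_lhs => rw [hspec]
      rw [trace_mul_cycle, hUnit, one_mul, trace_diagonal]
    have htr2 : trace (B * B) = ∑ m, lam m * lam m := by
      have h1 : B * B = (U * diagonal lam) * ((star U * U) * (diagonal lam * star U)) := by
        rw [hspec]; noncomm_ring
      have h2 : (diagonal lam * star U) * (U * diagonal lam)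
          = diagonal lam * (star U * U) * diagonal lam := by noncomm_ring
      rw [h1, hUnit, one_mul, trace_mul_comm, h2, hUnit, mul_one, diagonal_mul_diagonal,
        trace_diagonal]
    have hprod : lam 0 * lam 1 * lam 2 = 0 := by
      have hdet : det B = 0 := by
        rw [det_fin_three]
        simp only [hBab]
        ring
      have := hB.det_eq_prod_eigenvalues
      rw [hdet, Fin.prod_univ_three] at this
      exact_mod_cast this.symm
    have h1 : lam 0 + lam 1 + lam 2 = a 0 * b 0 + a 1 * b 1 + a 2 * b 2 := by
      have := htr.symm
      rw [Fin.sum_univ_three, trace_fin_three] at this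
      rw [this]
      simp only [hBab]
      ring
    have h2 : lam 0 * lam 0 + lam 1 * lam 1 + lam 2 * lam 2 =
        ((a 0 * b 0 + a 1 * b 1 + a 2 * b 2) ^ 2
          + (a 0 ^ 2 + a 1 ^ 2 + a 2 ^ 2) * (b 0 ^ 2 + b 1 ^ 2 + b 2 ^ 2)) / 2 := by
      have := htr2.symm
      rw [Fin.sum_univ_three, trace_fin_three] at this
      rw [this]
      simp only [Matrix.mul_apply, Fin.sum_univ_three, hBab]
      ring
    have hCS : (a 0 * b 0 + a 1 * b 1 + a 2 * b 2) ^ 2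
        ≤ (a 0 ^ 2 + a 1 ^ 2 + a 2 ^ 2) * (b 0 ^ 2 + b 1 ^ 2 + b 2 ^ 2) := by
      nlinarith [sq_nonneg (a 0 * b 1 - a 1 * b 0), sq_nonneg (a 0 * b 2 - a 2 * b 0),
        sq_nonneg (a 1 * b 2 - a 2 * b 1)]
    have h1sq : (lam 0 + lam 1 + lam 2) ^ 2 = (a 0 * b 0 + a 1 * b 1 + a 2 * b 2) ^ 2 := by
      rw [h1]
    have he2 : lam 0 * lam 1 + lam 0 * lam 2 + lam 1 * lam 2 ≤ 0 := by
      nlinarith [h1sq, h2, hCS]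
    rcases mul_eq_zero.mp hprod with h | h
    · rcases mul_eq_zero.mp h with h | h
      · refine eig_cases lam 1 0 2 (by decide) (by decide) (by decide) h ?_
        rw [h] at he2; linarith
      · refine eig_cases lam 0 1 2 (by decide) (by decide) (by decide) h ?_
        rw [h] at he2; linarith
    · refine eig_cases lam 0 2 1 (by decide) (by decide) (by decide) h ?_
      rw [h] at he2; linarith
  · rintro (⟨i, j, k, hij, hik, hjk, hi, hj, hk⟩ | ⟨i, j, hij, hi, hj⟩)
    · set μ : ℝ := Real.sqrt (lam k) with hμdef
      set ν : ℝ := Real.sqrt (-lam i) with hνdef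
      have hμ : μ ^ 2 = lam k := Real.sq_sqrt hk.le
      have hν : ν ^ 2 = -lam i := Real.sq_sqrt (by linarith)
      refine ⟨fun p => μ * U p k + ν * U p i, fun p => μ * U p k - ν * U p i, ?_⟩
      ext p q
      rw [hBentry p q, sum_fin3_eq _ i j k hij hik hjk]
      simp only [Matrix.smul_apply, Matrix.add_apply, vecMulVec_apply, smul_eq_mul]
      linear_combination (U p j * U q j) * hj - (U p k * U q k) * hμ + (U p i * U q i) * hν
    · have hex : ∀ i j : Fin 3, i ≠ j → ∃ k : Fin 3, k ≠ i ∧ k ≠ j := by decide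
      obtain ⟨k, hki, hkj⟩ := hex i j hij
      refine ⟨fun p => U p k, fun p => lam k * U p k, ?_⟩
      ext p q
      rw [hBentry p q, sum_fin3_eq _ i j k hij hki.symm hkj.symm]
      simp only [Matrix.smul_apply, Matrix.add_apply, vecMulVec_apply, smul_eq_mul]
      linear_combination (U p i * U q i) * hi + (U p j * U q j) * hj
end

section
/- Let A be a symmetric 3×3 real matrix whose ordered eigenvalues satisfy λ₁ < λ₂ = 0 < λ₃ (one zero eigenvalue and two nonzero eigenvalues of opposite signs). Then there exist vectors c, z ∈ ℝ³, both nonzero, such that A = (c zᵀ + z cᵀ)/2 with c and z linearly independent. -/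
open Matrix

/-- A symmetric 3×3 matrix with one negative, one zero, and one positive
eigenvalue is a symmetrized rank-one matrix with linearly independent
nonzero factors. -/
theorem symmetrized_rank_one_of_indefinite
    (A : Matrix (Fin 3) (Fin 3) ℝ) (hA : A.IsHermitian)
    (heig : ∃ i j k : Fin 3, i ≠ j ∧ i ≠ k ∧ j ≠ k ∧
      hA.eigenvalues i < 0 ∧ hA.eigenvalues j = 0 ∧ 0 < hA.eigenvalues k) :
    ∃ c z : Fin 3 → ℝ, c ≠ 0 ∧ z ≠ 0 ∧
      A = (1/2 : ℝ) • (vecMulVec c z + vecMulVec z c) ∧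
      LinearIndependent ℝ ![c, z] := by
  obtain ⟨i, j, k, hij, hik, hjk, hneg, hzero, hpos⟩ := heig
  set u : Fin 3 → ℝ := ⇑(hA.eigenvectorBasis i) with hu
  set w : Fin 3 → ℝ := ⇑(hA.eigenvectorBasis k) with hw
  -- orthonormality of the eigenvector basis as dot products
  have o : ∀ m l : Fin 3,
      (⇑(hA.eigenvectorBasis m)) ⬝ᵥ (⇑(hA.eigenvectorBasis l)) = if m = l then 1 else 0 := by
    intro m l
    have h := (orthonormal_iff_ite.mp hA.eigenvectorBasis.orthonormal) m l
    simpa [PiLp.inner_apply, RCLike.inner_apply, dotProduct, mul_comm] using h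
  -- the rank-one spectral decomposition
  have hdecomp : A = ∑ m : Fin 3, hA.eigenvalues m •
      vecMulVec (⇑(hA.eigenvectorBasis m)) (⇑(hA.eigenvectorBasis m)) := by
    conv_lhs => rw [hA.spectral_theorem]
    ext x y
    simp only [Unitary.conjStarAlgAut_apply, Matrix.mul_apply, Matrix.diagonal_apply, Function.comp_apply,
      Matrix.star_apply, Finset.sum_apply, Matrix.smul_apply, vecMulVec_apply,
      IsHermitian.eigenvectorUnitary_apply, smul_eq_mul, RCLike.ofReal_real_eq_id, id_eq,
      star_trivial]
    simp only [mul_ite, mul_zero, Finset.sum_ite_eq', Finset.mem_univ, if_true,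
      Matrix.sum_apply, Matrix.smul_apply, vecMulVec_apply, smul_eq_mul]
    apply Finset.sum_congr rfl
    intro m _
    ring
  -- restrict the sum to the three distinct indices
  have huniv : (Finset.univ : Finset (Fin 3)) = {i, j, k} := by
    symm
    apply Finset.eq_univ_of_card
    rw [Finset.card_insert_of_notMem (by simp [hij, hik]),
      Finset.card_insert_of_notMem (by simp [hjk]), Finset.card_singleton]
    simp
  have hdecomp' : A = hA.eigenvalues i • vecMulVec u u + hA.eigenvalues k • vecMulVec w w := by
    conv_lhs => rw [hdecomp]
    rw [Finset.sum_congr huniv (fun _ _ => rfl)]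
    rw [Finset.sum_insert (by simp [hij, hik])]
    rw [Finset.sum_insert (by simp [hjk])]
    rw [Finset.sum_singleton, hzero]
    simp [hu, hw]
  -- square roots of the nonzero eigenvalues
  set a : ℝ := Real.sqrt (-hA.eigenvalues i) with haa
  set b : ℝ := Real.sqrt (hA.eigenvalues k) with hbb
  have ha : 0 < a := Real.sqrt_pos.mpr (by linarith)
  have hb : 0 < b := Real.sqrt_pos.mpr hpos
  have ha2 : a * a = -hA.eigenvalues i := Real.mul_self_sqrt (by linarith)
  have hb2 : b * b = hA.eigenvalues k := Real.mul_self_sqrt (le_of_lt hpos)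
  set c : Fin 3 → ℝ := b • w + a • u with hc
  set z : Fin 3 → ℝ := b • w - a • u with hz
  -- dot products with the orthonormal vectors
  have oii : u ⬝ᵥ u = 1 := by rw [hu]; simpa using o i i
  have oik : u ⬝ᵥ w = 0 := by rw [hu, hw]; simpa [hik] using o i k
  have oki : w ⬝ᵥ u = 0 := by rw [hu, hw]; simpa [hik, Ne.symm hik] using o k i
  have okk : w ⬝ᵥ w = 1 := by rw [hw]; simpa using o k k
  have hudotc : u ⬝ᵥ c = a := by
    simp [hc, dotProduct_add, dotProduct_smul, oii, oik]
  have hwdotc : w ⬝ᵥ c = b := by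
    simp [hc, dotProduct_add, dotProduct_smul, oki, okk]
  have hudotz : u ⬝ᵥ z = -a := by
    simp [hz, dotProduct_sub, dotProduct_smul, oii, oik]
  have hwdotz : w ⬝ᵥ z = b := by
    simp [hz, dotProduct_sub, dotProduct_smul, oki, okk]
  refine ⟨c, z, ?_, ?_, ?_, ?_⟩
  · intro h
    rw [h, dotProduct_zero] at hudotc
    exact absurd hudotc.symm (ne_of_gt ha)
  · intro h
    rw [h, dotProduct_zero] at hwdotz
    exact absurd hwdotz.symm (ne_of_gt hb)
  · conv_lhs => rw [hdecomp']
    ext x y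
    simp only [Matrix.add_apply, Matrix.smul_apply, vecMulVec_apply, smul_eq_mul,
      hc, hz, Pi.add_apply, Pi.sub_apply, Pi.smul_apply]
    linear_combination (u x * u y) * ha2 - (w x * w y) * hb2
  · rw [LinearIndependent.pair_iff]
    intro s t hst
    have h1 : s * a + t * (-a) = 0 := by
      have := congrArg (fun v => u ⬝ᵥ v) hst
      simpa [dotProduct_add, dotProduct_smul, hudotc, hudotz] using this
    have h2 : s * b + t * b = 0 := by
      have := congrArg (fun v => w ⬝ᵥ v) hst
      simpa [dotProduct_add, dotProduct_smul, hwdotc, hwdotz] using this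
    have hst1 : s = t := mul_right_cancel₀ (ne_of_gt ha) (by linarith)
    have hst2 : s = -t := by
      have : s * b = -t * b := by linarith
      exact mul_right_cancel₀ (ne_of_gt hb) this
    constructor <;> linarith
end
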